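/- Let X be an infinite chain. Then J_f ⊆ ⟨J⟩ if and only if X^0 ≠ ∅, where J_f is the set of order-preserving self-maps with finite image, J is the set of order-preserving self-maps whose image has cardinality |X|, and ⟨J⟩ is the subsemigroup of O(X) generated by J. -/

import Mathlib

open Cardinal Set

section Aux
variable {X : Type*} [LinearOrder X] [Infinite X]
set_option linter.unusedSectionVars false

-- ===== forward direction =====

private lemma stepA {f : X → X} (hf : Monotone f)
    (hrange : Cardinal.mk ↥(Set.range f) = Cardinal.mk X)
    {a : X} (hA : Cardinal.mk ↥(Set.Iic a) < Cardinal.mk X)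
    (hab : ∀ c : X, Cardinal.mk ↥(Set.Iic c) < Cardinal.mk X ∨
      Cardinal.mk ↥(Set.Ici c) < Cardinal.mk X) :
    Cardinal.mk ↥(Set.Iic (f a)) < Cardinal.mk X := by
  rcases hab (f a) with h | h
  · exact h
  · exfalso
    have h1 : Set.range f = f '' (Set.Iio a) ∪ f '' (Set.Ici a) := by
      rw [← Set.image_union, Set.Iio_union_Ici, Set.image_univ]
    have h2 : Cardinal.mk ↥(f '' Set.Iio a) < Cardinal.mk X :=
      lt_of_le_of_lt ((Cardinal.mk_image_le).trans
        (Cardinal.mk_le_mk_of_subset Set.Iio_subset_Iic_self)) hA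
    have h3 : Cardinal.mk ↥(f '' Set.Ici a) < Cardinal.mk X := by
      refine lt_of_le_of_lt (Cardinal.mk_le_mk_of_subset ?_) h
      rintro _ ⟨y, hy, rfl⟩
      exact hf hy
    have : Cardinal.mk ↥(Set.range f) < Cardinal.mk X := by
      rw [h1]
      exact lt_of_le_of_lt (Cardinal.mk_union_le _ _)
        (Cardinal.add_lt_of_lt (Cardinal.infinite_iff.mp ‹Infinite X›) h2 h3)
    rw [hrange] at this; exact lt_irrefl _ this

private lemma stepB {f : X → X} (hf : Monotone f)
    (hrange : Cardinal.mk ↥(Set.range f) = Cardinal.mk X)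
    {b : X} (hB : Cardinal.mk ↥(Set.Ici b) < Cardinal.mk X)
    (hab : ∀ c : X, Cardinal.mk ↥(Set.Iic c) < Cardinal.mk X ∨
      Cardinal.mk ↥(Set.Ici c) < Cardinal.mk X) :
    Cardinal.mk ↥(Set.Ici (f b)) < Cardinal.mk X := by
  rcases hab (f b) with h | h
  · exfalso
    have h1 : Set.range f = f '' (Set.Iic b) ∪ f '' (Set.Ioi b) := by
      rw [← Set.image_union, Set.Iic_union_Ioi, Set.image_univ]
    have h2 : Cardinal.mk ↥(f '' Set.Ioi b) < Cardinal.mk X :=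
      lt_of_le_of_lt ((Cardinal.mk_image_le).trans
        (Cardinal.mk_le_mk_of_subset Set.Ioi_subset_Ici_self)) hB
    have h3 : Cardinal.mk ↥(f '' Set.Iic b) < Cardinal.mk X := by
      refine lt_of_le_of_lt (Cardinal.mk_le_mk_of_subset ?_) h
      rintro _ ⟨y, hy, rfl⟩
      exact hf hy
    have : Cardinal.mk ↥(Set.range f) < Cardinal.mk X := by
      rw [h1]
      exact lt_of_le_of_lt (Cardinal.mk_union_le _ _)
        (Cardinal.add_lt_of_lt (Cardinal.infinite_iff.mp ‹Infinite X›) h3 h2)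
    rw [hrange] at this; exact lt_irrefl _ this
  · exact h

private lemma forward_dir
    (H : ∀ α : X → X, Monotone α → (Set.range α).Finite →
      ∃ l : List (X → X), l ≠ [] ∧
        (∀ f ∈ l, Monotone f ∧ Cardinal.mk ↥(Set.range f) = Cardinal.mk X) ∧
        α = l.foldr (· ∘ ·) id) :
    (∃ x : X, Cardinal.mk ↥(Set.Iic x) = Cardinal.mk X ∧
      Cardinal.mk ↥(Set.Ici x) = Cardinal.mk X) := by
  by_contra hneg
  push_neg at hneg
  have hab : ∀ c : X, Cardinal.mk ↥(Set.Iic c) < Cardinal.mk X ∨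
      Cardinal.mk ↥(Set.Ici c) < Cardinal.mk X := by
    intro c
    rcases eq_or_lt_of_le (Cardinal.mk_set_le (Set.Iic c)) with h | h
    · exact Or.inr (lt_of_le_of_ne (Cardinal.mk_set_le _) (hneg c h))
    · exact Or.inl h
  have hnab : ∀ c : X, Cardinal.mk ↥(Set.Iic c) < Cardinal.mk X →
      Cardinal.mk ↥(Set.Ici c) < Cardinal.mk X → False := by
    intro c h1 h2
    have : Cardinal.mk ↥(Set.Iic c ∪ Set.Ici c) < Cardinal.mk X :=
      lt_of_le_of_lt (Cardinal.mk_union_le _ _)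
        (Cardinal.add_lt_of_lt (Cardinal.infinite_iff.mp ‹Infinite X›) h1 h2)
    rw [Set.Iic_union_Ici, Cardinal.mk_univ] at this
    exact lt_irrefl _ this
  obtain ⟨x₀⟩ : Nonempty X := inferInstance
  obtain ⟨l, hl0, hlJ, hle⟩ := H (fun _ => x₀) monotone_const
    (Set.finite_range_const)
  -- three cases
  by_cases hA : ∃ a : X, Cardinal.mk ↥(Set.Iic a) < Cardinal.mk X
  · by_cases hB : ∃ b : X, Cardinal.mk ↥(Set.Ici b) < Cardinal.mk X
    · obtain ⟨a, ha⟩ := hA; obtain ⟨b, hb⟩ := hB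
      have keyA : ∀ l' : List (X → X), (∀ f ∈ l', Monotone f ∧
          Cardinal.mk ↥(Set.range f) = Cardinal.mk X) →
          Cardinal.mk ↥(Set.Iic (l'.foldr (· ∘ ·) id a)) < Cardinal.mk X := by
        intro l' hl'
        induction l' with
        | nil => exact ha
        | cons f t ih =>
          have hf := hl' f (List.mem_cons_self)
          exact stepA hf.1 hf.2 (ih (fun g hg => hl' g (List.mem_cons_of_mem _ hg))) hab
      have keyB : ∀ l' : List (X → X), (∀ f ∈ l', Monotone f ∧
          Cardinal.mk ↥(Set.range f) = Cardinal.mk X) →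
          Cardinal.mk ↥(Set.Ici (l'.foldr (· ∘ ·) id b)) < Cardinal.mk X := by
        intro l' hl'
        induction l' with
        | nil => exact hb
        | cons f t ih =>
          have hf := hl' f (List.mem_cons_self)
          exact stepB hf.1 hf.2 (ih (fun g hg => hl' g (List.mem_cons_of_mem _ hg))) hab
      have e1 : l.foldr (· ∘ ·) id a = x₀ := (congrFun hle a).symm
      have e2 : l.foldr (· ∘ ·) id b = x₀ := (congrFun hle b).symm
      have := keyA l hlJ
      rw [e1] at this
      have := hnab x₀ this (by have := keyB l hlJ; rwa [e2] at this)
      exact this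
    · -- B empty : every Ici has full card; every Iic small
      push_neg at hB
      have hallA : ∀ c : X, Cardinal.mk ↥(Set.Iic c) < Cardinal.mk X := by
        intro c
        rcases hab c with h | h
        · exact h
        · exact absurd h (not_lt.mpr (hB c))
      have reach : ∀ l' : List (X → X), (∀ f ∈ l', Monotone f ∧
          Cardinal.mk ↥(Set.range f) = Cardinal.mk X) →
          ∀ c : X, ∃ y : X, c ≤ l'.foldr (· ∘ ·) id y := by
        intro l' hl'
        induction l' with
        | nil => exact fun c => ⟨c, le_rfl⟩
        | cons f t ih =>
          intro c
          have hf := hl' f (List.mem_cons_self)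
          have hz : ∃ z : X, c ≤ f z := by
            by_contra hcon
            push_neg at hcon
            have hsub : Set.range f ⊆ Set.Iic c :=
              fun w ⟨z, hz⟩ => hz ▸ le_of_lt (hcon z)
            have : Cardinal.mk ↥(Set.range f) < Cardinal.mk X :=
              lt_of_le_of_lt (Cardinal.mk_le_mk_of_subset hsub) (hallA c)
            rw [hf.2] at this; exact lt_irrefl _ this
          obtain ⟨z, hz⟩ := hz
          obtain ⟨y, hy⟩ := ih (fun g hg => hl' g (List.mem_cons_of_mem _ hg)) z
          exact ⟨y, le_trans hz (hf.1 hy)⟩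
      have : ∀ c : X, c ≤ x₀ := by
        intro c
        obtain ⟨y, hy⟩ := reach l hlJ c
        rwa [← congrFun hle y] at hy
      have : Set.Iic x₀ = Set.univ := Set.eq_univ_of_forall (fun c => this c)
      have h2 := hallA x₀
      rw [this, Cardinal.mk_univ] at h2
      exact lt_irrefl _ h2
  · push_neg at hA
    have hallB : ∀ c : X, Cardinal.mk ↥(Set.Ici c) < Cardinal.mk X := by
      intro c
      rcases hab c with h | h
      · exact absurd h (not_lt.mpr (hA c))
      · exact h
    have reach : ∀ l' : List (X → X), (∀ f ∈ l', Monotone f ∧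
        Cardinal.mk ↥(Set.range f) = Cardinal.mk X) →
        ∀ c : X, ∃ y : X, l'.foldr (· ∘ ·) id y ≤ c := by
      intro l' hl'
      induction l' with
      | nil => exact fun c => ⟨c, le_rfl⟩
      | cons f t ih =>
        intro c
        have hf := hl' f (List.mem_cons_self)
        have hz : ∃ z : X, f z ≤ c := by
          by_contra hcon
          push_neg at hcon
          have hsub : Set.range f ⊆ Set.Ici c :=
            fun w ⟨z, hz⟩ => hz ▸ le_of_lt (hcon z)
          have : Cardinal.mk ↥(Set.range f) < Cardinal.mk X :=
            lt_of_le_of_lt (Cardinal.mk_le_mk_of_subset hsub) (hallB c)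
          rw [hf.2] at this; exact lt_irrefl _ this
        obtain ⟨z, hz⟩ := hz
        obtain ⟨y, hy⟩ := ih (fun g hg => hl' g (List.mem_cons_of_mem _ hg)) z
        exact ⟨y, le_trans (hf.1 hy) hz⟩
    have : ∀ c : X, x₀ ≤ c := by
      intro c
      obtain ⟨y, hy⟩ := reach l hlJ c
      rwa [← congrFun hle y] at hy
    have : Set.Ici x₀ = Set.univ := Set.eq_univ_of_forall (fun c => this c)
    have h2 := hallB x₀
    rw [this, Cardinal.mk_univ] at h2
    exact lt_irrefl _ h2

-- ===== basics =====

/-- membership in J -/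
def IsJ (f : X → X) : Prop :=
  Monotone f ∧ Cardinal.mk ↥(Set.range f) = Cardinal.mk X

lemma isJ_of_subset {f : X → X} (hf : Monotone f) {s : Set X}
    (hs : Cardinal.mk ↥s = Cardinal.mk X) (hsub : s ⊆ Set.range f) : IsJ f :=
  ⟨hf, le_antisymm (Cardinal.mk_set_le _)
    (hs ▸ Cardinal.mk_le_mk_of_subset hsub)⟩

lemma mk_Iio_of {x : X} (hlo : Cardinal.mk ↥(Set.Iic x) = Cardinal.mk X) :
    Cardinal.mk ↥(Set.Iio x) = Cardinal.mk X := by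
  have h1 : Set.Iic x = insert x (Set.Iio x) := (Set.Iio_insert).symm
  have hinf : (ℵ₀ : Cardinal) ≤ Cardinal.mk ↥(Set.Iio x) := by
    by_contra hcon
    push_neg at hcon
    have : Cardinal.mk ↥(Set.Iic x) < ℵ₀ := by
      rw [h1]
      exact lt_of_le_of_lt (Cardinal.mk_insert_le)
        (Cardinal.add_lt_aleph0 hcon Cardinal.one_lt_aleph0)
    rw [hlo] at this
    exact absurd this (not_lt.mpr (Cardinal.infinite_iff.mp ‹Infinite X›))
  refine le_antisymm (Cardinal.mk_set_le _) ?_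
  calc Cardinal.mk X = Cardinal.mk ↥(Set.Iic x) := hlo.symm
    _ ≤ Cardinal.mk ↥(Set.Iio x) + 1 := by rw [h1]; exact Cardinal.mk_insert_le
    _ = Cardinal.mk ↥(Set.Iio x) := by
        rwa [Cardinal.add_one_eq]

lemma mk_Ioi_of {x : X} (hhi : Cardinal.mk ↥(Set.Ici x) = Cardinal.mk X) :
    Cardinal.mk ↥(Set.Ioi x) = Cardinal.mk X := by
  have h1 : Set.Ici x = insert x (Set.Ioi x) := (Set.Ioi_insert).symm
  have hinf : (ℵ₀ : Cardinal) ≤ Cardinal.mk ↥(Set.Ioi x) := by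
    by_contra hcon
    push_neg at hcon
    have : Cardinal.mk ↥(Set.Ici x) < ℵ₀ := by
      rw [h1]
      exact lt_of_le_of_lt (Cardinal.mk_insert_le)
        (Cardinal.add_lt_aleph0 hcon Cardinal.one_lt_aleph0)
    rw [hhi] at this
    exact absurd this (not_lt.mpr (Cardinal.infinite_iff.mp ‹Infinite X›))
  refine le_antisymm (Cardinal.mk_set_le _) ?_
  calc Cardinal.mk X = Cardinal.mk ↥(Set.Ici x) := hhi.symm
    _ ≤ Cardinal.mk ↥(Set.Ioi x) + 1 := by rw [h1]; exact Cardinal.mk_insert_le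
    _ = Cardinal.mk ↥(Set.Ioi x) := by
        rwa [Cardinal.add_one_eq]

/-- collapse the closed interval [a,b] to the point c (a ≤ c ≤ b). -/
def cI (a b c : X) (y : X) : X := if a ≤ y ∧ y ≤ b then c else y

lemma cI_mono {a b c : X} (hac : a ≤ c) (hcb : c ≤ b) : Monotone (cI a b c) := by
  intro y y' h
  unfold cI
  by_cases h1 : a ≤ y ∧ y ≤ b <;> by_cases h2 : a ≤ y' ∧ y' ≤ b
  · simp [h1, h2]
  · rw [if_pos h1, if_neg h2]
    push_neg at h2
    have hb : b < y' := h2 (le_trans h1.1 h)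
    exact le_of_lt (lt_of_le_of_lt hcb hb)
  · rw [if_neg h1, if_pos h2]
    push_neg at h1
    have hya : y < a := by
      by_contra hcon
      push_neg at hcon
      exact absurd (le_trans h h2.2) (not_le.mpr (h1 hcon))
    exact le_trans (le_of_lt hya) hac
  · rw [if_neg h1, if_neg h2]
    exact h

lemma cI_eq_self_of_lt {a b c y : X} (h : y < a) : cI a b c y = y := by
  unfold cI
  rw [if_neg]
  rintro ⟨h1, -⟩
  exact absurd h (not_lt.mpr h1)

lemma cI_eq_self_of_gt {a b c y : X} (h : b < y) : cI a b c y = y := by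
  unfold cI
  rw [if_neg]
  rintro ⟨-, h2⟩
  exact absurd h (not_lt.mpr h2)

lemma cI_eq_c {a b c y : X} (h1 : a ≤ y) (h2 : y ≤ b) : cI a b c y = c := by
  unfold cI; rw [if_pos ⟨h1, h2⟩]

lemma cI_range_lower {a b c : X} : Set.Iio a ⊆ Set.range (cI a b c) := by
  intro y hy
  exact ⟨y, cI_eq_self_of_lt hy⟩

lemma cI_range_upper {a b c : X} : Set.Ioi b ⊆ Set.range (cI a b c) := by
  intro y hy
  exact ⟨y, cI_eq_self_of_gt hy⟩

lemma exists_chain_list {s : Set X} (hs : s.Infinite) (d : ℕ) :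
    ∃ rs : List X, rs.length = d ∧ rs.Chain' (· < ·) ∧ ∀ r ∈ rs, r ∈ s := by
  obtain ⟨t, hts, htc⟩ := hs.exists_subset_card_eq d
  refine ⟨t.sort (· ≤ ·), by rw [Finset.length_sort, htc], ?_, ?_⟩
  · exact (List.isChain_iff_pairwise).mpr (Finset.sortedLT_sort t).pairwise
  · intro r hr
    exact hts (by rwa [Finset.mem_sort] at hr)


/-- step function determined by a sorted list of (threshold, value) pairs:
    value of the last pair whose threshold is ≤ y (and first value below). -/
def stepF : List (X × X) → X → X
  | [], y => y
  | [(_, t)], _ => t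
  | (_, t) :: q :: r, y => if y < q.1 then t else stepF (q :: r) y

lemma stepF_mem : ∀ (qs : List (X × X)), qs ≠ [] → ∀ y : X,
    stepF qs y ∈ qs.map Prod.snd
  | [], h, _ => absurd rfl h
  | [(p, t)], _, y => by simp [stepF]
  | (p, t) :: q :: r, _, y => by
      rw [stepF]
      by_cases hy : y < q.1
      · rw [if_pos hy]; simp
      · rw [if_neg hy]
        have := stepF_mem (q :: r) (by simp) y
        simp only [List.map_cons, List.mem_cons] at this ⊢
        tauto

lemma stepF_mono : ∀ (qs : List (X × X)),
    List.Chain' (· < ·) (qs.map Prod.snd) → Monotone (stepF qs)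
  | [] , _ => fun y y' h => by simp [stepF, h]
  | [(p, t)], _ => fun y y' h => le_refl _
  | (p, t) :: q :: r, hc => by
      intro y y' h
      rw [stepF, stepF]
      have hc' : List.Chain' (· < ·) ((q :: r).map Prod.snd) :=
        (List.isChain_cons_cons.mp (by simpa [List.Chain'] using hc)).2
      by_cases h1 : y < q.1 <;> by_cases h2 : y' < q.1
      · rw [if_pos h1, if_pos h2]
      · rw [if_pos h1, if_neg h2]
        -- t ≤ stepF (q :: r) y'
        have hmem := stepF_mem (q :: r) (by simp) y'
        have hpair : ∀ s ∈ (q :: r).map Prod.snd, t < s := by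
          have := (List.isChain_iff_pairwise).mp (by simpa using hc : List.Chain' (· < ·) (t :: (q :: r).map Prod.snd))
          exact (List.pairwise_cons.mp this).1
        exact le_of_lt (hpair _ hmem)
      · exact absurd (lt_of_le_of_lt h h2) h1
      · rw [if_neg h1, if_neg h2]
        exact stepF_mono (q :: r) hc' h

lemma stepF_eval : ∀ (qs : List (X × X)),
    List.Chain' (· < ·) (qs.map Prod.fst) → ∀ p t, (p, t) ∈ qs → stepF qs p = t
  | [], _, p, t, h => absurd h (List.not_mem_nil)
  | [(p₁, t₁)], _, p, t, h => by
      simp only [List.mem_singleton, Prod.mk.injEq] at h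
      rw [stepF, h.2]
  | (p₁, t₁) :: q :: r, hc, p, t, h => by
      have hlt : p₁ < q.1 := (List.isChain_cons_cons.mp (by simpa [List.Chain'] using hc)).1
      have hc' : List.Chain' (· < ·) ((q :: r).map Prod.fst) :=
        (List.isChain_cons_cons.mp (by simpa [List.Chain'] using hc)).2
      rcases List.mem_cons.mp h with h | h
      · rw [stepF]
        rw [Prod.mk.injEq] at h
        rw [if_pos (h.1 ▸ hlt), h.2]
      · -- (p,t) in tail: p ≥ q.1
        have hpw : ∀ s ∈ (q :: r).map Prod.fst, p₁ < s := by
          have := (List.isChain_iff_pairwise).mp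
            (by simpa using hc : List.Chain' (· < ·) (p₁ :: (q :: r).map Prod.fst))
          exact (List.pairwise_cons.mp this).1
        have hq : q.1 ≤ p := by
          have hpw2 := (List.isChain_iff_pairwise).mp hc'
          simp only [List.map_cons, List.pairwise_cons] at hpw2
          rcases List.mem_cons.mp h with h' | h'
          · rw [← h']
          · exact le_of_lt (hpw2.1 _ (List.mem_map_of_mem (f := Prod.fst) h'))
        rw [stepF, if_neg (not_lt.mpr hq)]
        exact stepF_eval (q :: r) hc' p t h



/-- the "floor relocation" map: step function below x, identity above x -/
def floorM (x : X) (qs : List (X × X)) (y : X) : X :=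
  if y ≤ x then stepF qs y else y

variable {x : X} {qs : List (X × X)}

lemma floorM_stepF_le (hval : ∀ pt ∈ qs, pt.2 ≤ x) (y : X) (hy : y ≤ x) :
    stepF qs y ≤ x := by
  rcases eq_or_ne qs [] with rfl | hne
  · simpa [stepF] using hy
  · have := stepF_mem qs hne y
    simp only [List.mem_map] at this
    obtain ⟨pt, hpt, hpt2⟩ := this
    exact hpt2 ▸ hval pt hpt

lemma floorM_mono (hc2 : List.Chain' (· < ·) (qs.map Prod.snd))
    (hval : ∀ pt ∈ qs, pt.2 ≤ x) : Monotone (floorM x qs) := by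
  intro y y' h
  unfold floorM
  by_cases h1 : y ≤ x <;> by_cases h2 : y' ≤ x
  · rw [if_pos h1, if_pos h2]; exact stepF_mono qs hc2 h
  · rw [if_pos h1, if_neg h2]
    exact le_trans (floorM_stepF_le hval y h1) (le_of_not_ge h2)
  · exact absurd (le_trans h h2) h1
  · rw [if_neg h1, if_neg h2]; exact h

lemma floorM_fix_high (y : X) (hy : x < y) : floorM x qs y = y := by
  unfold floorM; rw [if_neg (not_le.mpr hy)]

lemma floorM_range : Set.Ioi x ⊆ Set.range (floorM x qs) := by
  intro y hy
  exact ⟨y, floorM_fix_high y hy⟩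

lemma floorM_eval (hc1 : List.Chain' (· < ·) (qs.map Prod.fst))
    {p t : X} (hpt : (p, t) ∈ qs) (hp : p ≤ x) : floorM x qs p = t := by
  unfold floorM
  rw [if_pos hp]
  exact stepF_eval qs hc1 p t hpt

-- ===== M2 =====
lemma foldr_comp_apply (l : List (X → X)) (g : X → X) (y : X) :
    l.foldr (· ∘ ·) g y = l.foldr (· ∘ ·) id (g y) := by
  induction l with
  | nil => rfl
  | cons f t ih => simp only [List.foldr_cons, Function.comp_apply, ih]

lemma M2 (x : X)
    (hIio : Cardinal.mk ↥(Set.Iio x) = Cardinal.mk X)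
    (hIoi : Cardinal.mk ↥(Set.Ioi x) = Cardinal.mk X) :
    ∀ ps : List (X × X), List.Chain' (· < ·) (ps.map Prod.fst) →
      List.Chain' (· < ·) (ps.map Prod.snd) →
      (∀ pt ∈ ps, pt.1 ≤ x) →
      ∃ l : List (X → X), (∀ f ∈ l, IsJ f) ∧
        (∀ pt ∈ ps, l.foldr (· ∘ ·) id pt.1 = pt.2) ∧
        (∀ y : X, x < y → (∀ pt ∈ ps, pt.2 < y) → l.foldr (· ∘ ·) id y = y) := by
  intro ps
  induction ps using List.reverseRecOn with
  | nil =>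
    intro _ _ _
    exact ⟨[], by simp, by simp, fun y _ _ => rfl⟩
  | append_singleton rest pt ih =>
    obtain ⟨p, t⟩ := pt
    intro hc1 hc2 hale
    -- decompose chains
    rw [List.map_append, List.Chain', List.isChain_iff_pairwise, List.pairwise_append] at hc1 hc2
    have hc1rest : List.Chain' (· < ·) (rest.map Prod.fst) :=
      (List.isChain_iff_pairwise).mpr hc1.1
    have hc2rest : List.Chain' (· < ·) (rest.map Prod.snd) :=
      (List.isChain_iff_pairwise).mpr hc2.1
    have hrest_lt_p : ∀ qt ∈ rest, qt.1 < p := by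
      intro qt hqt
      exact hc1.2.2 _ (List.mem_map_of_mem (f := Prod.fst) hqt) p (by simp)
    have hrest_t_lt : ∀ qt ∈ rest, qt.2 < t := by
      intro qt hqt
      exact hc2.2.2 _ (List.mem_map_of_mem (f := Prod.snd) hqt) t (by simp)
    have hp_le : p ≤ x := hale (p, t) (by simp)
    have hale_rest : ∀ pt ∈ rest, pt.1 ≤ x := fun pt h => hale pt (by simp [h])
    by_cases ht : t ≤ x
    · -- single floor map
      have hvals : ∀ qt ∈ rest ++ [(p, t)], qt.2 ≤ x := by
        intro qt hqt
        rcases List.mem_append.mp hqt with h | h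
        · exact le_of_lt (lt_of_lt_of_le (hrest_t_lt qt h) ht)
        · simp only [List.mem_singleton] at h
          rw [h]; exact ht
      have hcf : List.Chain' (· < ·) ((rest ++ [(p, t)]).map Prod.fst) := by
        rw [List.map_append, List.Chain', List.isChain_iff_pairwise, List.pairwise_append]
        exact hc1
      have hcs : List.Chain' (· < ·) ((rest ++ [(p, t)]).map Prod.snd) := by
        rw [List.map_append, List.Chain', List.isChain_iff_pairwise, List.pairwise_append]
        exact hc2
      refine ⟨[floorM x (rest ++ [(p, t)])], ?_, ?_, ?_⟩
      · intro f hf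
        simp only [List.mem_singleton] at hf
        subst hf
        exact isJ_of_subset (floorM_mono hcs hvals) hIoi floorM_range
      · intro qt hqt
        show floorM x (rest ++ [(p, t)]) qt.1 = qt.2
        exact floorM_eval hcf (by simpa using hqt) (hale qt hqt)
      · intro y hy _
        show floorM x (rest ++ [(p, t)]) y = y
        exact floorM_fix_high y hy
    · push_neg at ht
      obtain ⟨l', hJ', hev', hfix'⟩ := ih hc1rest hc2rest hale_rest
      set f₁ : X → X := cI p x x with hf₁
      set f₂ : X → X := cI x t t with hf₂
      refine ⟨l' ++ [f₂, f₁], ?_, ?_, ?_⟩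
      · intro f hf
        rcases List.mem_append.mp hf with h | h
        · exact hJ' f h
        · simp only [List.mem_cons, List.mem_singleton] at h
          rcases h with rfl | rfl | h
          · exact isJ_of_subset (cI_mono (le_of_lt ht) le_rfl) hIio cI_range_lower
          · exact isJ_of_subset (cI_mono hp_le le_rfl) hIoi cI_range_upper
          · exact absurd h (List.not_mem_nil)
      · intro qt hqt
        have hfold : (l' ++ [f₂, f₁]).foldr (· ∘ ·) id qt.1
            = l'.foldr (· ∘ ·) id (f₂ (f₁ qt.1)) := by
          rw [List.foldr_append, foldr_comp_apply]; rfl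
        rcases List.mem_append.mp hqt with h | h
        · have h1 : f₁ qt.1 = qt.1 := cI_eq_self_of_lt (hrest_lt_p qt h)
          have h2 : f₂ qt.1 = qt.1 :=
            cI_eq_self_of_lt (lt_of_lt_of_le (hrest_lt_p qt h) hp_le)
          rw [hfold, h1, h2]
          exact hev' qt h
        · simp only [List.mem_singleton] at h
          subst h
          have h1 : f₁ p = x := cI_eq_c le_rfl hp_le
          have h2 : f₂ x = t := cI_eq_c le_rfl (le_of_lt ht)
          rw [hfold]
          show l'.foldr (· ∘ ·) id (f₂ (f₁ p)) = t
          rw [h1, h2]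
          exact hfix' t ht (fun qt hqt => hrest_t_lt qt hqt)
      · intro y hy hylt
        have hfold : (l' ++ [f₂, f₁]).foldr (· ∘ ·) id y
            = l'.foldr (· ∘ ·) id (f₂ (f₁ y)) := by
          rw [List.foldr_append, foldr_comp_apply]; rfl
        have hty : t < y := hylt (p, t) (by simp)
        have h1 : f₁ y = y := cI_eq_self_of_gt hy
        have h2 : f₂ y = y := cI_eq_self_of_gt hty
        rw [hfold, h1, h2]
        exact hfix' y hy (fun qt hqt => lt_trans (hrest_t_lt qt hqt) hty)

-- ===== M1 =====
-- zipWith helpers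
lemma zip1_map_fst : ∀ (l : List (X × X)) (r : List X), r.length = l.length →
    (List.zipWith (fun pt rr => (pt.1, rr)) l r).map Prod.fst = l.map Prod.fst
  | [], _, _ => by simp
  | a :: l, [], h => by simp at h
  | a :: l, b :: r, h => by
      simp only [List.zipWith_cons_cons, List.map_cons, List.length_cons] at *
      rw [zip1_map_fst l r (by omega)]

lemma zip1_map_snd : ∀ (l : List (X × X)) (r : List X), r.length = l.length →
    (List.zipWith (fun pt rr => (pt.1, rr)) l r).map Prod.snd = r
  | [], [], _ => by simp
  | [], b :: r, h => by simp at h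
  | a :: l, [], h => by simp at h
  | a :: l, b :: r, h => by
      simp only [List.zipWith_cons_cons, List.map_cons, List.length_cons] at *
      rw [zip1_map_snd l r (by omega)]

lemma zip2_map_fst : ∀ (l : List (X × X)) (r : List X), r.length = l.length →
    (List.zipWith (fun pt rr => (rr, pt.2)) l r).map Prod.fst = r
  | [], [], _ => by simp
  | [], b :: r, h => by simp at h
  | a :: l, [], h => by simp at h
  | a :: l, b :: r, h => by
      simp only [List.zipWith_cons_cons, List.map_cons, List.length_cons] at *
      rw [zip2_map_fst l r (by omega)]

lemma zip2_map_snd : ∀ (l : List (X × X)) (r : List X), r.length = l.length →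
    (List.zipWith (fun pt rr => (rr, pt.2)) l r).map Prod.snd = l.map Prod.snd
  | [], _, _ => by simp
  | a :: l, [], h => by simp at h
  | a :: l, b :: r, h => by
      simp only [List.zipWith_cons_cons, List.map_cons, List.length_cons] at *
      rw [zip2_map_snd l r (by omega)]

lemma zip_partner : ∀ (l : List (X × X)) (r : List X), r.length = l.length →
    ∀ pt ∈ l, ∃ rr ∈ r, (pt.1, rr) ∈ List.zipWith (fun pt rr => (pt.1, rr)) l r ∧
      (rr, pt.2) ∈ List.zipWith (fun pt rr => (rr, pt.2)) l r
  | [], _, _ => by simp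
  | a :: l, [], h => by simp at h
  | a :: l, b :: r, h => by
      intro pt hpt
      rcases List.mem_cons.mp hpt with rfl | hpt
      · exact ⟨b, by simp, by simp, by simp⟩
      · obtain ⟨rr, hrr, h1, h2⟩ := zip_partner l r (by simpa using h) pt hpt
        exact ⟨rr, by simp [hrr], by simp [h1], by simp [h2]⟩

lemma dropWhile_ne_nil_head {α : Type*} (p : α → Bool) :
    ∀ (l : List α), l.dropWhile p ≠ [] →
    ∃ a t', l.dropWhile p = a :: t' ∧ p a = false
  | [], h => absurd rfl h
  | a :: t, h => by
      by_cases hpa : p a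
      · rw [List.dropWhile_cons_of_pos hpa] at h ⊢
        exact dropWhile_ne_nil_head p t h
      · rw [List.dropWhile_cons_of_neg hpa]
        exact ⟨a, t, rfl, by simpa using hpa⟩

lemma M1 (x : X)
    (hIio : Cardinal.mk ↥(Set.Iio x) = Cardinal.mk X)
    (hIoi : Cardinal.mk ↥(Set.Ioi x) = Cardinal.mk X)
    (hInf : (Set.Iio x).Infinite) :
    ∀ (n : ℕ) (ps : List (X × X)),
      (ps.filter (fun pt => decide (x < pt.1))).length ≤ n →
      List.Chain' (· < ·) (ps.map Prod.fst) →
      List.Chain' (· < ·) (ps.map Prod.snd) →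
      ∃ (l : List (X → X)) (qs : List (X × X)),
        (∀ f ∈ l, IsJ f) ∧
        List.Chain' (· < ·) (qs.map Prod.fst) ∧
        List.Chain' (· < ·) (qs.map Prod.snd) ∧
        (∀ pt ∈ qs, pt.1 ≤ x) ∧
        (∀ pt ∈ ps, (l.foldr (· ∘ ·) id pt.1, pt.2) ∈ qs) := by
  intro n
  induction n with
  | zero =>
    intro ps hcount hc1 hc2
    have hnil : ps.filter (fun pt => decide (x < pt.1)) = [] :=
      List.length_eq_zero_iff.mp (Nat.le_zero.mp hcount)
    have hall : ∀ pt ∈ ps, pt.1 ≤ x := by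
      intro pt hpt
      have := List.filter_eq_nil_iff.mp hnil pt hpt
      simpa using this
    exact ⟨[], ps, by simp, hc1, hc2, hall,
      fun pt hpt => by simpa using hpt⟩
  | succ n ih =>
    intro ps hcount hc1 hc2
    by_cases h0 : (ps.filter (fun pt => decide (x < pt.1))).length = 0
    · have hnil : ps.filter (fun pt => decide (x < pt.1)) = [] :=
        List.length_eq_zero_iff.mp h0
      have hall : ∀ pt ∈ ps, pt.1 ≤ x := by
        intro pt hpt
        have := List.filter_eq_nil_iff.mp hnil pt hpt
        simpa using this
      exact ⟨[], ps, by simp, hc1, hc2, hall,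
        fun pt hpt => by simpa using hpt⟩
    · -- split
      set lows := ps.takeWhile (fun pt => decide (pt.1 ≤ x)) with hlowsdef
      set ups := ps.dropWhile (fun pt => decide (pt.1 ≤ x)) with hupsdef
      have hsplit : lows ++ ups = ps := by
        rw [hlowsdef, hupsdef]; exact List.takeWhile_append_dropWhile
      have hlows_le : ∀ pt ∈ lows, pt.1 ≤ x := by
        intro pt hpt
        have := List.mem_takeWhile_imp hpt
        simpa using this
      have hups_ne : ups ≠ [] := by
        intro hupsnil
        apply h0
        have hpsl : ps = lows := by rw [← hsplit, hupsnil, List.append_nil]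
        rw [List.length_eq_zero_iff, List.filter_eq_nil_iff]
        intro pt hpt
        simp only [decide_eq_true_eq, not_lt]
        exact hlows_le pt (hpsl ▸ hpt)
      have hne2 : List.dropWhile (fun pt => decide (pt.1 ≤ x)) ps ≠ [] := by
        rw [← hupsdef]; exact hups_ne
      obtain ⟨q, ups', hups, hqfalse⟩ :=
        dropWhile_ne_nil_head (fun pt : X × X => decide (pt.1 ≤ x)) ps hne2
      rw [← hupsdef] at hups
      have hqx : x < q.1 := by simpa using hqfalse
      have hps_eq : ps = lows ++ q :: ups' := by rw [← hsplit, hups]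
      -- chains decomposition
      have hc1' := hc1
      have hc2' := hc2
      rw [hps_eq, List.map_append, List.Chain', List.isChain_iff_pairwise, List.pairwise_append] at hc1' hc2'
      have hpw_lowsf : List.Pairwise (· < ·) (lows.map Prod.fst) := hc1'.1
      have hpw_upsf : List.Pairwise (· < ·) ((q :: ups').map Prod.fst) := hc1'.2.1
      have hpw_upsf' := hpw_upsf
      rw [List.map_cons, List.pairwise_cons] at hpw_upsf'
      have hups'_gt : ∀ pt ∈ ups', q.1 < pt.1 := by
        intro pt hpt
        exact hpw_upsf'.1 pt.1 (List.mem_map_of_mem (f := Prod.fst) hpt)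
      have hups'_gtx : ∀ pt ∈ ups', x < pt.1 :=
        fun pt hpt => lt_trans hqx (hups'_gt pt hpt)
      have hpw_ups'f : List.Pairwise (· < ·) (ups'.map Prod.fst) := hpw_upsf'.2
      -- fresh landing spots
      obtain ⟨rs, hrslen, hrschain, hrsmem⟩ := exists_chain_list hInf lows.length
      have hrsx : ∀ r ∈ rs, r < x := fun r hr => hrsmem r hr
      set qsF := List.zipWith (fun (pt : X × X) (rr : X) => (pt.1, rr)) lows rs with hqsF
      set lowsN := List.zipWith (fun (pt : X × X) (rr : X) => (rr, pt.2)) lows rs with hlowsN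
      have hqsF_f : qsF.map Prod.fst = lows.map Prod.fst := zip1_map_fst lows rs hrslen
      have hqsF_s : qsF.map Prod.snd = rs := zip1_map_snd lows rs hrslen
      have hlowsN_f : lowsN.map Prod.fst = rs := zip2_map_fst lows rs hrslen
      have hlowsN_s : lowsN.map Prod.snd = lows.map Prod.snd := zip2_map_snd lows rs hrslen
      -- the two maps
      set f₀ : X → X := floorM x qsF with hf₀
      set f : X → X := cI x q.1 x with hf
      have hJf₀ : IsJ f₀ := by
        refine isJ_of_subset (floorM_mono ?_ ?_) hIoi floorM_range
        · rw [hqsF_s]; exact hrschain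
        · intro pt hpt
          have : pt.2 ∈ qsF.map Prod.snd := List.mem_map_of_mem (f := Prod.snd) hpt
          rw [hqsF_s] at this
          exact le_of_lt (hrsx _ this)
      have hJf : IsJ f := isJ_of_subset (cI_mono le_rfl (le_of_lt hqx)) hIio cI_range_lower
      -- new configuration
      set newps := lowsN ++ (x, q.2) :: ups' with hnewps
      have hnew_f : newps.map Prod.fst = rs ++ x :: ups'.map Prod.fst := by
        rw [hnewps, List.map_append, hlowsN_f, List.map_cons]
      have hnew_s : newps.map Prod.snd = ps.map Prod.snd := by
        rw [hnewps, List.map_append, hlowsN_s, hps_eq, List.map_append, List.map_cons,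
          List.map_cons]
      have hcnew1 : List.Chain' (· < ·) (newps.map Prod.fst) := by
        rw [hnew_f, List.Chain', List.isChain_iff_pairwise, List.pairwise_append]
        refine ⟨(List.isChain_iff_pairwise).mp hrschain, ?_, ?_⟩
        · rw [List.pairwise_cons]
          exact ⟨fun a ha => by
              obtain ⟨pt, hpt, rfl⟩ := List.mem_map.mp ha
              exact hups'_gtx pt hpt,
            hpw_ups'f⟩
        · intro a ha b hb
          have hax : a < x := hrsx a ha
          rcases List.mem_cons.mp hb with rfl | hb
          · exact hax
          · obtain ⟨pt, hpt, rfl⟩ := List.mem_map.mp hb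
            exact lt_trans hax (hups'_gtx pt hpt)
      have hcnew2 : List.Chain' (· < ·) (newps.map Prod.snd) := by
        rw [hnew_s]; exact hc2
      -- count decreases
      have hfiltN : newps.filter (fun pt => decide (x < pt.1)) = ups' := by
        rw [hnewps, List.filter_append]
        have h1 : lowsN.filter (fun pt => decide (x < pt.1)) = [] := by
          rw [List.filter_eq_nil_iff]
          intro pt hpt
          have : pt.1 ∈ lowsN.map Prod.fst := List.mem_map_of_mem (f := Prod.fst) hpt
          rw [hlowsN_f] at this
          simpa using not_lt.mpr (le_of_lt (hrsx _ this))
        have h2 : ((x, q.2) :: ups').filter (fun pt => decide (x < pt.1)) = ups' := by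
          rw [List.filter_cons_of_neg (by simp)]
          rw [List.filter_eq_self]
          intro pt hpt
          simpa using hups'_gtx pt hpt
        rw [h1, h2, List.nil_append]
      have hfiltO : ps.filter (fun pt => decide (x < pt.1)) = q :: ups' := by
        rw [hps_eq, List.filter_append]
        have h1 : lows.filter (fun pt => decide (x < pt.1)) = [] := by
          rw [List.filter_eq_nil_iff]
          intro pt hpt
          simpa using not_lt.mpr (hlows_le pt hpt)
        have h2 : (q :: ups').filter (fun pt => decide (x < pt.1)) = q :: ups' := by
          rw [List.filter_eq_self]
          intro pt hpt
          rcases List.mem_cons.mp hpt with rfl | hpt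
          · simpa using hqx
          · simpa using hups'_gtx pt hpt
        rw [h1, h2, List.nil_append]
      have hcount_new : (newps.filter (fun pt => decide (x < pt.1))).length ≤ n := by
        rw [hfiltN]
        have : (ps.filter (fun pt => decide (x < pt.1))).length = ups'.length + 1 := by
          rw [hfiltO]; rfl
        omega
      -- recurse
      obtain ⟨l', qs, hJ', hcf', hcs', hqs_le, hcorr'⟩ := ih newps hcount_new hcnew1 hcnew2
      refine ⟨l' ++ [f, f₀], qs, ?_, hcf', hcs', hqs_le, ?_⟩
      · intro g hg
        rcases List.mem_append.mp hg with h | h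
        · exact hJ' g h
        · rcases List.mem_cons.mp h with rfl | h
          · exact hJf
          · rcases List.mem_cons.mp h with rfl | h
            · exact hJf₀
            · exact absurd h (List.not_mem_nil)
      · intro pt hpt
        have hfold : ∀ z : X, (l' ++ [f, f₀]).foldr (· ∘ ·) id z
            = l'.foldr (· ∘ ·) id (f (f₀ z)) := by
          intro z
          rw [List.foldr_append, foldr_comp_apply]; rfl
        rw [hps_eq] at hpt
        rcases List.mem_append.mp hpt with hmem | hmem
        · -- pt in lows
          obtain ⟨rr, hrrmem, hin1, hin2⟩ := zip_partner lows rs hrslen pt hmem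
          have he0 : f₀ pt.1 = rr := by
            refine floorM_eval ?_ hin1 (hlows_le pt hmem)
            rw [hqsF_f]
            exact (List.isChain_iff_pairwise).mpr hpw_lowsf
          have he1 : f rr = rr := cI_eq_self_of_lt (hrsx rr hrrmem)
          rw [hfold, he0, he1]
          exact hcorr' (rr, pt.2) (List.mem_append.mpr (Or.inl hin2))
        · rcases List.mem_cons.mp hmem with rfl | hmem
          · -- pt = q
            have he0 : f₀ pt.1 = pt.1 := floorM_fix_high pt.1 hqx
            have he1 : f pt.1 = x := cI_eq_c (le_of_lt hqx) le_rfl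
            rw [hfold, he0, he1]
            exact hcorr' (x, pt.2) (List.mem_append.mpr (Or.inr (List.mem_cons_self)))
          · -- pt in ups'
            have he0 : f₀ pt.1 = pt.1 := floorM_fix_high pt.1 (hups'_gtx pt hmem)
            have he1 : f pt.1 = pt.1 := cI_eq_self_of_gt (hups'_gt pt hmem)
            rw [hfold, he0, he1]
            have : (pt.1, pt.2) ∈ newps := by
              rw [hnewps]
              exact List.mem_append.mpr (Or.inr (List.mem_cons_of_mem _ (by simpa using hmem)))
            exact hcorr' pt ((Prod.mk.eta (p := pt)) ▸ this)


-- ===== phase 1 =====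
/-- collapse the fiber of t to the point a -/
def mcol (α : X → X) (t a : X) (y : X) : X := if α y = t then a else y

/-- collapse the part of the fiber of `α x` below x, to x -/
def mlow (α : X → X) (x : X) (y : X) : X := if α y = α x ∧ y ≤ x then x else y

/-- collapse the part of the fiber of `α x` above x, to x -/
def mhigh (α : X → X) (x : X) (y : X) : X := if α y = α x ∧ x ≤ y then x else y

variable {α : X → X} (hmono : Monotone α)

lemma fiber_onesided {x t : X} (hmono : Monotone α) (hne : t ≠ α x) :
    (∀ z, α z = t → z < x) ∨ (∀ z, α z = t → x < z) := by
  by_cases h : ∃ z, α z = t ∧ x ≤ z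
  · right; intro z hz
    obtain ⟨z₀, hz₀, hxz₀⟩ := h
    rcases lt_or_ge x z with h' | h'
    · exact h'
    · exfalso
      have h1 : α z ≤ α x := hmono h'
      have h2 : α x ≤ α z₀ := hmono hxz₀
      rw [hz] at h1; rw [hz₀] at h2
      exact hne (le_antisymm h1 h2)
  · left; intro z hz
    push_neg at h
    exact h z hz

lemma mcol_mono {t a : X} (hmono : Monotone α) (ha : α a = t) :
    Monotone (mcol α t a) := by
  intro y y' hyy
  unfold mcol
  by_cases hy : α y = t <;> by_cases hy' : α y' = t
  · rw [if_pos hy, if_pos hy']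
  · rw [if_pos hy, if_neg hy']
    have h1 : t ≤ α y' := hy ▸ hmono hyy
    have : a < y' := by
      by_contra hcon
      push_neg at hcon
      have : α y' ≤ t := ha ▸ hmono hcon
      exact hy' (le_antisymm this h1)
    exact le_of_lt this
  · rw [if_neg hy, if_pos hy']
    have h1 : α y ≤ t := hy' ▸ hmono hyy
    have : y < a := by
      by_contra hcon
      push_neg at hcon
      have : t ≤ α y := ha ▸ hmono hcon
      exact hy (le_antisymm h1 this)
    exact le_of_lt this
  · rw [if_neg hy, if_neg hy']
    exact hyy

lemma mcol_isJ {x t a : X} (hmono : Monotone α) (ha : α a = t) (hne : t ≠ α x)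
    (hlo : Cardinal.mk ↥(Set.Iic x) = Cardinal.mk X)
    (hhi : Cardinal.mk ↥(Set.Ici x) = Cardinal.mk X) :
    IsJ (mcol α t a) := by
  rcases fiber_onesided hmono hne with h | h
  · refine isJ_of_subset (mcol_mono hmono ha) hhi ?_
    intro y hy
    refine ⟨y, ?_⟩
    unfold mcol
    rw [if_neg]
    intro hyt
    exact absurd hy (not_le.mpr (h y hyt))
  · refine isJ_of_subset (mcol_mono hmono ha) hlo ?_
    intro y hy
    refine ⟨y, ?_⟩
    unfold mcol
    rw [if_neg]
    intro hyt
    exact absurd hy (not_le.mpr (h y hyt))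

lemma mlow_mono {x : X} (hmono : Monotone α) : Monotone (mlow α x) := by
  intro y y' hyy
  unfold mlow
  by_cases h1 : α y = α x ∧ y ≤ x <;> by_cases h2 : α y' = α x ∧ y' ≤ x
  · rw [if_pos h1, if_pos h2]
  · rw [if_pos h1, if_neg h2]
    by_cases hy' : α y' = α x
    · have : ¬ (y' ≤ x) := fun hc => h2 ⟨hy', hc⟩
      exact le_of_lt (not_le.mp this)
    · have ht : α x ≤ α y' := h1.1 ▸ hmono hyy
      have : x < y' := by
        by_contra hc
        push_neg at hc
        exact hy' (le_antisymm (hmono hc) ht)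
      exact le_of_lt this
  · rw [if_neg h1, if_pos h2]
    exact le_trans hyy h2.2
  · rw [if_neg h1, if_neg h2]
    exact hyy

lemma mhigh_mono {x : X} (hmono : Monotone α) : Monotone (mhigh α x) := by
  intro y y' hyy
  unfold mhigh
  by_cases h1 : α y = α x ∧ x ≤ y <;> by_cases h2 : α y' = α x ∧ x ≤ y'
  · rw [if_pos h1, if_pos h2]
  · rw [if_pos h1, if_neg h2]
    have hx : x ≤ y' := le_trans h1.2 hyy
    by_cases hy' : α y' = α x
    · exact absurd ⟨hy', hx⟩ h2
    · exact hx
  · rw [if_neg h1, if_pos h2]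
    by_cases hy : α y = α x
    · have : ¬ (x ≤ y) := fun hc => h1 ⟨hy, hc⟩
      exact le_of_lt (not_le.mp this)
    · have ht : α y ≤ α x := h2.1 ▸ hmono hyy
      have : y < x := by
        by_contra hc
        push_neg at hc
        exact hy (le_antisymm ht (hmono hc))
      exact le_of_lt this
  · rw [if_neg h1, if_neg h2]
    exact hyy

lemma mlow_isJ {x : X} (hmono : Monotone α)
    (hIoi : Cardinal.mk ↥(Set.Ioi x) = Cardinal.mk X) : IsJ (mlow α x) := by
  refine isJ_of_subset (mlow_mono hmono) hIoi ?_
  intro y hy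
  refine ⟨y, ?_⟩
  unfold mlow
  rw [if_neg]
  rintro ⟨-, h2⟩
  exact absurd hy (not_lt.mpr h2)

lemma mhigh_isJ {x : X} (hmono : Monotone α)
    (hIio : Cardinal.mk ↥(Set.Iio x) = Cardinal.mk X) : IsJ (mhigh α x) := by
  refine isJ_of_subset (mhigh_mono hmono) hIio ?_
  intro y hy
  refine ⟨y, ?_⟩
  unfold mhigh
  rw [if_neg]
  rintro ⟨-, h2⟩
  exact absurd hy (not_lt.mpr h2)

lemma mhigh_mlow {x : X} (y : X) :
    mhigh α x (mlow α x y) = if α y = α x then x else y := by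
  by_cases ha : α y = α x
  · by_cases hyx : y ≤ x
    · have h1 : mlow α x y = x := by unfold mlow; rw [if_pos ⟨ha, hyx⟩]
      rw [h1]
      unfold mhigh
      rw [if_pos ⟨rfl, le_rfl⟩, if_pos ha]
    · have h1 : mlow α x y = y := by unfold mlow; rw [if_neg (fun hc => hyx hc.2)]
      rw [h1]
      unfold mhigh
      rw [if_pos ⟨ha, le_of_lt (not_le.mp hyx)⟩, if_pos ha]
  · have h1 : mlow α x y = y := by unfold mlow; rw [if_neg (fun hc => ha hc.1)]
    rw [h1]
    unfold mhigh
    rw [if_neg (fun hc => ha hc.1), if_neg ha]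

open Classical in
/-- representative chooser -/
noncomputable def repc (α : X → X) (t : X) : X :=
  if h : ∃ z, α z = t then h.choose else t

lemma repc_spec {t : X} (h : ∃ z, α z = t) : α (repc α t) = t := by
  classical
  unfold repc
  rw [dif_pos h]
  exact h.choose_spec

lemma Lcol_eval (hmono : Monotone α) :
    ∀ (ts : List X), (∀ t ∈ ts, (∃ z, α z = t)) → ∀ z : X,
    ((ts.map (fun t => mcol α t (repc α t))).foldr (· ∘ ·) id) z =
      if α z ∈ ts then repc α (α z) else z := by
  intro ts
  induction ts with
  | nil => intro _ z; simp
  | cons t ts' ih =>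
    intro hts z
    have hrec := ih (fun s hs => hts s (List.mem_cons_of_mem _ hs)) z
    simp only [List.map_cons, List.foldr_cons, Function.comp_apply]
    rw [hrec]
    have hrange : α (repc α (α z)) = α z := repc_spec ⟨z, rfl⟩
    by_cases hz : α z ∈ ts'
    · rw [if_pos hz]
      unfold mcol
      by_cases hzt : α z = t
      · rw [if_pos (hrange.trans hzt), if_pos (List.mem_cons.mpr (Or.inl hzt)), hzt]
      · rw [if_neg (fun hc => hzt (hrange ▸ hc)),
          if_pos (List.mem_cons.mpr (Or.inr hz))]
    · rw [if_neg hz]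
      unfold mcol
      by_cases hzt : α z = t
      · rw [if_pos hzt, if_pos (List.mem_cons.mpr (Or.inl hzt)), hzt]
      · rw [if_neg hzt, if_neg (by
          intro hc
          rcases List.mem_cons.mp hc with h | h
          · exact hzt h
          · exact hz h)]


-- ===== glue =====
lemma foldr_append_apply (a b : List (X → X)) (y : X) :
    (a ++ b).foldr (· ∘ ·) id y = a.foldr (· ∘ ·) id (b.foldr (· ∘ ·) id y) := by
  rw [List.foldr_append, foldr_comp_apply]

lemma backward_dir (x : X)
    (hlo : Cardinal.mk ↥(Set.Iic x) = Cardinal.mk X)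
    (hhi : Cardinal.mk ↥(Set.Ici x) = Cardinal.mk X)
    (α : X → X) (hmono : Monotone α) (hfin : (Set.range α).Finite) :
    ∃ l : List (X → X), l ≠ [] ∧
      (∀ f ∈ l, Monotone f ∧ Cardinal.mk ↥(Set.range f) = Cardinal.mk X) ∧
      α = l.foldr (· ∘ ·) id := by
  classical
  have hIio := mk_Iio_of hlo
  have hIoi := mk_Ioi_of hhi
  have hInf : (Set.Iio x).Infinite := by
    rw [← Set.infinite_coe_iff]
    refine Cardinal.infinite_iff.mpr ?_
    rw [hIio]
    exact Cardinal.infinite_iff.mp inferInstance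
  set VS : List X := hfin.toFinset.sort (· ≤ ·) with hVS
  have hVSmem : ∀ t, t ∈ VS ↔ t ∈ Set.range α := by
    intro t
    rw [hVS, Finset.mem_sort, Set.Finite.mem_toFinset]
  have hVSpw : VS.Pairwise (· < ·) := (Finset.sortedLT_sort _).pairwise
  set ts : List X := VS.filter (fun t => decide (t ≠ α x)) with hts_def
  have hts : ∀ t ∈ ts, (∃ z, α z = t) ∧ t ≠ α x := by
    intro t ht
    rw [hts_def, List.mem_filter] at ht
    refine ⟨(hVSmem t).mp ht.1, by simpa using ht.2⟩
  set REP : X → X := fun t => if t = α x then x else repc α t with hREPdef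
  have hREP : ∀ t ∈ Set.range α, α (REP t) = t := by
    intro t ht
    simp only [hREPdef]
    by_cases h : t = α x
    · rw [if_pos h]; exact h.symm
    · rw [if_neg h]; exact repc_spec ht
  set Lcol : List (X → X) := ts.map (fun t => mcol α t (repc α t)) with hLcol
  set Lphase : List (X → X) := Lcol ++ [mhigh α x, mlow α x] with hLphase
  have hphase_eval : ∀ y : X, Lphase.foldr (· ∘ ·) id y = REP (α y) := by
    intro y
    rw [hLphase, foldr_append_apply]
    have h1 : ([mhigh α x, mlow α x] : List (X → X)).foldr (· ∘ ·) id y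
        = mhigh α x (mlow α x y) := rfl
    rw [h1, mhigh_mlow, hLcol]
    rw [Lcol_eval hmono ts (fun t ht => (hts t ht).1)]
    by_cases ha : α y = α x
    · rw [if_pos ha]
      have hx : α x ∉ ts := by
        rw [hts_def, List.mem_filter]
        rintro ⟨-, h⟩
        simp at h
      rw [if_neg (by exact hx)]
      simp only [hREPdef]
      rw [if_pos ha]
    · rw [if_neg ha]
      have hmem : α y ∈ ts := by
        rw [hts_def, List.mem_filter]
        exact ⟨(hVSmem _).mpr ⟨y, rfl⟩, by simpa using ha⟩
      rw [if_pos hmem]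
      simp only [hREPdef]
      rw [if_neg ha]
  -- the pair list
  set ps : List (X × X) := VS.map (fun t => (REP t, t)) with hps
  have hps_snd : ps.map Prod.snd = VS := by
    rw [hps, List.map_map]
    have h : (Prod.snd ∘ fun t : X => (REP t, t)) = id := rfl
    rw [h, List.map_id]
  have hps_fst : ps.map Prod.fst = VS.map REP := by
    rw [hps, List.map_map]
    rfl
  have hc2 : List.Chain' (· < ·) (ps.map Prod.snd) := by
    rw [hps_snd]; exact (List.isChain_iff_pairwise).mpr hVSpw
  have hREPlt : ∀ a ∈ VS, ∀ b ∈ VS, a < b → REP a < REP b := by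
    intro a ha b hb hab
    by_contra hcon
    push_neg at hcon
    have h1 : α (REP b) ≤ α (REP a) := hmono hcon
    rw [hREP a ((hVSmem a).mp ha), hREP b ((hVSmem b).mp hb)] at h1
    exact absurd h1 (not_le.mpr hab)
  have hc1 : List.Chain' (· < ·) (ps.map Prod.fst) := by
    rw [hps_fst, List.Chain', List.isChain_iff_pairwise, List.pairwise_map]
    exact List.Pairwise.imp_of_mem (fun {a b} ha hb h => hREPlt a ha b hb h) hVSpw
  -- M1 then M2
  obtain ⟨l₁, qs, hJ₁, hqc1, hqc2, hqle, hcorr⟩ :=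
    M1 x hIio hIoi hInf (ps.filter (fun pt => decide (x < pt.1))).length ps le_rfl hc1 hc2
  obtain ⟨l₂, hJ₂, hev₂, -⟩ := M2 x hIio hIoi qs hqc1 hqc2 hqle
  refine ⟨l₂ ++ l₁ ++ Lphase, ?_, ?_, ?_⟩
  · -- nonempty
    rw [hLphase]
    intro hcontra
    rcases List.append_eq_nil_iff.mp hcontra with ⟨-, h2⟩
    rcases List.append_eq_nil_iff.mp h2 with ⟨-, h3⟩
    exact List.cons_ne_nil _ _ h3
  · intro f hf
    rcases List.mem_append.mp hf with hf | hf
    · rcases List.mem_append.mp hf with hf | hf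
      · exact hJ₂ f hf
      · exact hJ₁ f hf
    · rw [hLphase] at hf
      rcases List.mem_append.mp hf with hf | hf
      · rw [hLcol] at hf
        obtain ⟨t, ht, rfl⟩ := List.mem_map.mp hf
        have htt := hts t ht
        exact mcol_isJ hmono (repc_spec htt.1) htt.2 hlo hhi
      · rcases List.mem_cons.mp hf with rfl | hf
        · exact mhigh_isJ hmono hIio
        · rcases List.mem_cons.mp hf with rfl | hf
          · exact mlow_isJ hmono hIoi
          · exact absurd hf (List.not_mem_nil)
  · funext y
    rw [List.append_assoc, foldr_append_apply, foldr_append_apply, hphase_eval]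
    have hpair : (REP (α y), α y) ∈ ps := by
      rw [hps]
      exact List.mem_map.mpr ⟨α y, (hVSmem _).mpr ⟨y, rfl⟩, rfl⟩
    have h1 := hcorr (REP (α y), α y) hpair
    have h2 := hev₂ _ h1
    exact h2.symm

end Aux

theorem stmt_14 {X : Type*} [LinearOrder X] [Infinite X] :
    (∀ α : X → X, Monotone α → (Set.range α).Finite →
      ∃ l : List (X → X), l ≠ [] ∧
        (∀ f ∈ l, Monotone f ∧ Cardinal.mk ↥(Set.range f) = Cardinal.mk X) ∧
        α = l.foldr (· ∘ ·) id) ↔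
    (∃ x : X, Cardinal.mk ↥(Set.Iic x) = Cardinal.mk X ∧
      Cardinal.mk ↥(Set.Ici x) = Cardinal.mk X) := by
  constructor
  · exact forward_dir
  · rintro ⟨x, hlo, hhi⟩ α hmono hfin
    exact backward_dir x hlo hhi α hmono hfin
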